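/- Let n ≥ 1 and let f be an affine permutation of quasi-period n for which there exists m ∈ ℤ with i + m ≤ f(i) ≤ i + m + n for all i ∈ ℤ. If i < j, i < j', f(i) > f(j), f(i) > f(j'), and f(j) ≡ f(j') (mod n), then f(j) = f(j'). (Equivalently: the Rothe diagram of any element of T·Bound(n) is toric, i.e., no two distinct cells of D(f) in the cylinder ℤ²/ℤ(n,n) map to the same point of the torus ℤ²/(nℤ × nℤ).) -/

import Mathlib

lemma stmt10_aux (n : ℕ) (f : ℤ ≃ ℤ)
    (hf : ∀ i : ℤ, f (i + n) = f i + n) (x : ℤ) :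
    ∀ k : ℤ, f (x + k * n) = f x + k * n := by
  have hneg : ∀ y : ℤ, f (y - n) = f y - n := by
    intro y
    have := hf (y - n)
    simp at this
    omega
  intro k
  induction k using Int.induction_on with
  | zero => simp
  | succ k ih =>
    have := hf (x + k * n)
    push_cast at *
    rw [show x + (k + 1) * n = (x + k * n) + n by ring, this, ih]; ring
  | pred k ih =>
    have := hneg (x + (-k) * n)
    push_cast at *
    rw [show x + (-k - 1) * n = (x + -k * n) - n by ring, this, ih]; ring

theorem stmt10 (n : ℕ) (hn : 1 ≤ n) (f : ℤ ≃ ℤ)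
    (hf : ∀ i : ℤ, f (i + n) = f i + n)
    (m : ℤ) (hb : ∀ i : ℤ, i + m ≤ f i ∧ f i ≤ i + m + n)
    (i j j' : ℤ) (hij : i < j) (hij' : i < j')
    (h1 : f j < f i) (h2 : f j' < f i)
    (hcong : (n : ℤ) ∣ (f j - f j')) : f j = f j' := by
  obtain ⟨k, hk⟩ := hcong
  have hfj : f j = f (j' + k * n) := by
    rw [stmt10_aux n f hf j' k]; linarith [mul_comm (n:ℤ) k]
  have hjj : j = j' + k * n := f.injective hfj
  have hbi := hb i
  have hbj := hb j
  have hbj' := hb j'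
  have hjlt : j < i + n := by omega
  have hj'lt : j' < i + n := by omega
  have hk0 : k = 0 := by
    rcases lt_trichotomy k 0 with h | h | h
    · nlinarith [hjj, hjlt, hj'lt]
    · exact h
    · nlinarith [hjj, hjlt, hj'lt]
  rw [hk0] at hk; omega
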